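/- Importance-weighted multiclass reduction identity: fix x, a conditional distribution over rewards r ∈ [0,1]^k, and uniform action-choosing distribution p(a) = 1/k. Under Zadrozny's transform (observed (x,a,r_a) becomes multiclass example with label a and weight r_a/p(a)), the expected importance-weighted multiclass loss of predicting action a equals E[Σ_{a'≠a} r_{a'}]. Consequently, the importance-weighted regret of predicting a versus the optimal a* equals E[r_{a*} − r_a], the policy regret. -/
import Mathlib


open MeasureTheory

/-- importance-weighted multiclass reduction identity.  Fix `x`, a
conditional distribution `μ` over reward vectors `r ∈ [0,1]^k`, and the uniform
action-choosing distribution `p(a) = 1/k`.  Under Zadrozny's transform, the expected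
importance-weighted multiclass loss of predicting action `a` is
`E_r[Σ_{a'≠a} p(a')·(r_{a'}/p(a'))] = E[Σ_{a'≠a} r_{a'}]`, and consequently the
importance-weighted regret of predicting `a` versus `a*` equals the policy regret
`E[r_{a*} − r_a]`. -/
theorem iw_multiclass_reduction_identity
    (k : ℕ) (hk : 1 ≤ k)
    (μ : Measure (Fin k → ℝ)) [IsProbabilityMeasure μ]
    (hr : ∀ᵐ r ∂μ, ∀ a, r a ∈ Set.Icc (0:ℝ) 1)
    (hint : ∀ a, Integrable (fun r => r a) μ) :
    (∀ a : Fin k,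
        (∫ r, ∑ a' ∈ Finset.univ.filter (· ≠ a), (1 / k : ℝ) * (r a' / (1 / k : ℝ)) ∂μ)
          = ∫ r, ∑ a' ∈ Finset.univ.filter (· ≠ a), r a' ∂μ)
    ∧ (∀ a astar : Fin k,
        (∫ r, ∑ a' ∈ Finset.univ.filter (· ≠ a), (1 / k : ℝ) * (r a' / (1 / k : ℝ)) ∂μ)
          - (∫ r, ∑ a' ∈ Finset.univ.filter (· ≠ astar), (1 / k : ℝ) * (r a' / (1 / k : ℝ)) ∂μ)
        = ∫ r, (r astar - r a) ∂μ) := by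
  have hkne : (k : ℝ) ≠ 0 := Nat.cast_ne_zero.mpr (by omega)
  have hcancel : ∀ (x : ℝ), (1 / k : ℝ) * (x / (1 / k : ℝ)) = x := by
    intro x; field_simp
  have heq : ∀ a : Fin k,
      (∫ r, ∑ a' ∈ Finset.univ.filter (· ≠ a), (1 / k : ℝ) * (r a' / (1 / k : ℝ)) ∂μ)
        = ∫ r, ∑ a' ∈ Finset.univ.filter (· ≠ a), r a' ∂μ := by
    intro a
    congr 1
    funext r
    exact Finset.sum_congr rfl fun a' _ => hcancel _
  refine ⟨heq, fun a astar => ?_⟩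
  rw [heq a, heq astar]
  have hsum : ∀ b : Fin k,
      (∫ r, ∑ a' ∈ Finset.univ.filter (· ≠ b), r a' ∂μ)
        = ∑ a' ∈ Finset.univ.filter (· ≠ b), ∫ r, r a' ∂μ :=
    fun b => integral_finset_sum _ (fun a' _ => hint a')
  rw [hsum a, hsum astar, integral_sub (hint astar) (hint a)]
  have hs : ∀ b : Fin k,
      ∑ a' ∈ Finset.univ.filter (· ≠ b), ∫ r, r a' ∂μ
        = (∑ a' : Fin k, ∫ r, r a' ∂μ) - ∫ r, r b ∂μ := by
    intro b
    rw [eq_sub_iff_add_eq,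
      show Finset.univ.filter (· ≠ b) = Finset.univ.erase b from Finset.filter_ne' _ _,
      Finset.sum_erase_add _ _ (Finset.mem_univ b)]
  rw [hs a, hs astar]
  ring
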